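/- arXiv:1510.08711 — 3 statements merged into one kernel-verified Lean document; each statement's English description precedes it below -/
import Mathlib

section
/- Let D be a non-commutative division ring that is weakly locally finite and algebraic over its center. Then the multiplicative group D* is not finitely generated. -/
/-- `ℤ` is a Jacobson ring. -/
theorem int_isJacobsonRing : IsJacobsonRing ℤ := by
  rw [isJacobsonRing_iff_prime_eq]
  intro P hP
  by_cases hbot : P = ⊥
  · subst hbot
    refine le_antisymm ?_ Ideal.le_jacobson
    intro x hx
    rw [Ideal.mem_jacobson_bot] at hx
    have h1 := hx 1
    have h2 := hx (-1)
    rw [Int.isUnit_iff] at h1 h2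
    rw [mul_one] at h1
    rw [mul_neg_one] at h2
    rw [Ideal.mem_bot]
    rcases h1 with h1 | h1 <;> rcases h2 with h2 | h2 <;> omega
  · haveI := IsPrime.to_maximal_ideal (hpi := hP) hbot
    exact Ideal.jacobson_eq_self_of_isMaximal

theorem not_finite_int_rat : ¬ Module.Finite ℤ ℚ := by
  intro h
  haveI : Algebra.IsIntegral ℤ ℚ := Algebra.IsIntegral.of_finite ℤ ℚ
  obtain ⟨y, hy⟩ := IsIntegrallyClosed.isIntegral_iff.mp
    (Algebra.IsIntegral.isIntegral (R := ℤ) (2⁻¹ : ℚ))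
  have hy' : ((y : ℤ) : ℚ) = 2⁻¹ := by exact_mod_cast hy
  have h2 : ((2 * y : ℤ) : ℚ) = (1 : ℚ) := by push_cast [hy']; norm_num
  have : (2 * y : ℤ) = 1 := by exact_mod_cast h2
  omega

theorem finite_of_field_of_closure_eq_top (K : Type*) [Field K]
    (s : Set K) (hfin : s.Finite) (hs : Subring.closure s = ⊤) : Finite K := by
  haveI := int_isJacobsonRing
  have hadj : Algebra.adjoin ℤ s = ⊤ := by
    rw [Algebra.adjoin_int, hs]
    ext x
    simp [Algebra.mem_top, mem_subalgebraOfSubring]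
  haveI : Algebra.FiniteType ℤ K :=
    ⟨⟨hfin.toFinset, by rwa [Set.Finite.coe_toFinset]⟩⟩
  haveI : Module.Finite ℤ K := finite_of_finite_type_of_isJacobsonRing ℤ K
  obtain hp | hp := CharP.char_is_prime_or_zero K (ringChar K)
  · haveI : Fact (Nat.Prime (ringChar K)) := ⟨hp⟩
    letI : Algebra (ZMod (ringChar K)) K := ZMod.algebra K (ringChar K)
    haveI : Module.Finite (ZMod (ringChar K)) K := by
      obtain ⟨t, ht⟩ := Module.Finite.fg_top (R := ℤ) (M := K)
      refine ⟨⟨t, top_unique ?_⟩⟩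
      calc (⊤ : Submodule ℤ K) = Submodule.span ℤ (t : Set K) := ht.symm
        _ ≤ (Submodule.span (ZMod (ringChar K)) (t : Set K)).restrictScalars ℤ :=
            Submodule.span_le_restrictScalars ℤ (ZMod (ringChar K)) _
    exact Module.finite_of_finite (ZMod (ringChar K))
  · exfalso
    haveI : CharP K 0 := hp ▸ ringChar.charP K
    haveI : CharZero K := CharP.charP_to_charZero K
    haveI : IsNoetherian ℤ K :=
      isNoetherian_top_iff.mp (isNoetherian_of_fg_of_noetherian ⊤ Module.Finite.fg_top)
    set f : ℚ →ₗ[ℤ] K := (Rat.castHom K).toAddMonoidHom.toIntLinearMap with hf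
    have hinj : Function.Injective f := (Rat.castHom K).injective
    haveI : Module.Finite ℤ (LinearMap.range f) :=
      Module.Finite.iff_fg.mpr (IsNoetherian.noetherian _)
    haveI : Module.Finite ℤ ℚ := Module.Finite.equiv (LinearEquiv.ofInjective f hinj).symm
    exact not_finite_int_rat inferInstance


theorem closure_subtype_eq_top {R : Type*} [Ring R] (S : Subring R) (u : Set R)
    (h : Subring.closure u = S) :
    Subring.closure ((fun x : S => (x : R)) ⁻¹' u) = ⊤ := by
  have hmem : ∀ x, x ∈ Subring.closure u → x ∈ S := fun x hx => h ▸ hx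
  rw [eq_top_iff]
  rintro z -
  have hz : (z : R) ∈ Subring.closure u := by rw [h]; exact z.2
  have main : ∀ (x : R) (hx : x ∈ Subring.closure u) (hxS : x ∈ S),
      (⟨x, hxS⟩ : S) ∈ Subring.closure ((fun y : S => (y : R)) ⁻¹' u) := by
    intro x hx
    induction hx using Subring.closure_induction with
    | mem a ha => exact fun haS => Subring.subset_closure ha
    | zero => exact fun h0 => zero_mem _
    | one => exact fun h1 => one_mem _
    | add a b ha hb pa pb => exact fun hS => add_mem (pa (hmem a ha)) (pb (hmem b hb))
    | neg a ha pa => exact fun hS => neg_mem (pa (hmem a ha))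
    | mul a b ha hb pa pb => exact fun hS => mul_mem (pa (hmem a ha)) (pb (hmem b hb))
  exact main z hz z.2


theorem key_finite (D : Type*) [DivisionRing D]
    (hfin : Module.Finite (Subring.center D) D)
    (G : Finset D) (hG : Subring.closure (G : Set D) = ⊤) : Finite D := by
  classical
  obtain ⟨y0, hy0⟩ := hfin.fg_top
  set y : Finset D := insert 1 y0 with hydef
  have hy : Submodule.span (Subring.center D) (y : Set D) = ⊤ :=
    top_unique (hy0 ▸ Submodule.span_mono (by simp [hydef]))
  choose c _ hc using fun x : D =>
    Submodule.mem_span_finset.mp (show x ∈ Submodule.span (Subring.center D) (y : Set D) by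
      rw [hy]; trivial)
  -- the finite set of structure constants
  set cset : Finset D :=
    (((y ×ˢ y).image (fun p => p.1 * p.2)) ∪ G).biUnion
      (fun x => y.image (fun i => (c x i : D))) with hcsetdef
  have hcsub : (cset : Set D) ⊆ (Subring.center D : Set D) := by
    intro z hz
    simp only [hcsetdef, Finset.coe_biUnion, Set.mem_iUnion, Finset.mem_coe,
      Finset.mem_image] at hz
    obtain ⟨x, -, i, -, rfl⟩ := hz
    exact (c x i).2
  set B0 : Subring D := Subring.closure (cset : Set D) with hB0def
  have hB0le : B0 ≤ Subring.center D := Subring.closure_le.mpr hcsub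
  -- B0 is noetherian
  haveI : IsNoetherianRing B0 := by
    set csetF : Finset (Subring.center D) :=
      cset.attach.image (fun x => (⟨x.1, hcsub x.2⟩ : Subring.center D)) with hcsetF
    haveI : IsNoetherianRing (Subring.closure ((csetF : Set (Subring.center D)))) :=
      is_noetherian_subring_closure _ (Finset.finite_toSet _)
    have himg : (Subring.center D).subtype '' (csetF : Set (Subring.center D))
        = (cset : Set D) := by
      ext z
      constructor
      · rintro ⟨w, hw, rfl⟩
        simp only [hcsetF, Finset.coe_image, Set.mem_image, Finset.mem_coe,
          Finset.mem_attach] at hw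
        obtain ⟨v, -, rfl⟩ := hw
        exact v.2
      · intro hz
        refine ⟨⟨z, hcsub hz⟩, ?_, rfl⟩
        simp only [hcsetF, Finset.coe_image, Set.mem_image, Finset.mem_coe]
        exact ⟨⟨z, hz⟩, Finset.mem_attach _ _, rfl⟩
    have hmap : (Subring.closure ((csetF : Set (Subring.center D)))).map
        (Subring.center D).subtype = B0 := by
      rw [RingHom.map_closure, himg, hB0def]
    exact hmap ▸ isNoetherianRing_of_ringEquiv _
      (Subring.equivMapOfInjective _ (Subring.center D).subtype
        (Subring.center D).subtype_injective)
  -- the span of y over B0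
  have hsmul : ∀ (b : B0) (x : D), b • x = (b : D) * x := fun _ _ => rfl
  set P : Submodule B0 D := Submodule.span B0 (y : Set D) with hPdef
  have hxP : ∀ x : D, (∀ i ∈ y, (c x i : D) ∈ B0) → x ∈ P := by
    intro x hx
    rw [← hc x]
    refine Submodule.sum_mem _ (fun i hi => ?_)
    have h1 : c x i • i = (⟨(c x i : D), hx i hi⟩ : B0) • i := rfl
    rw [h1]
    exact Submodule.smul_mem _ _ (Submodule.subset_span (Finset.mem_coe.mpr hi))
  have hcmem : ∀ (x : D), x ∈ ((y ×ˢ y).image (fun p => p.1 * p.2)) ∪ G →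
      ∀ i ∈ y, (c x i : D) ∈ B0 := by
    intro x hx i hi
    apply Subring.subset_closure
    simp only [hcsetdef, Finset.coe_biUnion, Set.mem_iUnion, Finset.mem_coe,
      Finset.mem_image]
    exact ⟨x, hx, i, hi, rfl⟩
  have hyy : ∀ a ∈ y, ∀ b ∈ y, a * b ∈ P := by
    intro a ha b hb
    refine hxP _ (hcmem _ ?_)
    exact Finset.mem_union_left _ (Finset.mem_image.mpr ⟨(a, b), Finset.mem_product.mpr ⟨ha, hb⟩, rfl⟩)
  have hGP : ∀ g ∈ G, g ∈ P := fun g hg => hxP _ (hcmem _ (Finset.mem_union_right _ hg))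
  have hcentral : ∀ (r : B0) (w : D), w * (r : D) = (r : D) * w := by
    intro r w
    exact Subring.mem_center_iff.mp (hB0le r.2) w
  have hmul : ∀ x ∈ P, ∀ z ∈ P, x * z ∈ P := by
    intro x hx
    induction hx using Submodule.span_induction with
    | mem a ha =>
      intro z hz
      induction hz using Submodule.span_induction with
      | mem b hb => exact hyy a ha b hb
      | zero => rw [mul_zero]; exact P.zero_mem
      | add u v hu hv pu pv => rw [mul_add]; exact P.add_mem pu pv
      | smul r u hu pu =>
        have : a * (r • u) = r • (a * u) := by
          rw [hsmul, hsmul, ← mul_assoc, hcentral r a, mul_assoc]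
        rw [this]
        exact P.smul_mem _ pu
    | zero => intro z hz; rw [zero_mul]; exact P.zero_mem
    | add u v hu hv pu pv => intro z hz; rw [add_mul]; exact P.add_mem (pu z hz) (pv z hz)
    | smul r u hu pu =>
      intro z hz
      have : (r • u) * z = r • (u * z) := by rw [hsmul, hsmul, mul_assoc]
      rw [this]
      exact P.smul_mem _ (pu z hz)
  have hone : (1 : D) ∈ P := Submodule.subset_span (by simp [hydef])
  set R0 : Subring D :=
    { carrier := (P : Set D)
      zero_mem' := P.zero_mem
      one_mem' := hone
      add_mem' := fun ha hb => P.add_mem ha hb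
      neg_mem' := fun ha => P.neg_mem ha
      mul_mem' := fun {a b} ha hb => hmul a ha b hb } with hR0def
  have hRle : (⊤ : Subring D) ≤ R0 := hG ▸ Subring.closure_le.mpr (fun g hg => hGP g hg)
  have hPtop : P = ⊤ := top_unique (fun x _ => hRle (Subring.mem_top x))
  haveI : Module.Finite B0 D := ⟨⟨y, by rw [← hPdef, hPtop]⟩⟩
  haveI : IsNoetherian B0 D :=
    isNoetherian_top_iff.mp (isNoetherian_of_fg_of_noetherian ⊤ Module.Finite.fg_top)
  -- the center as a B0-submodule
  set Fc : Submodule B0 D :=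
    { carrier := (Subring.center D : Set D)
      add_mem' := fun ha hb => add_mem ha hb
      zero_mem' := zero_mem _
      smul_mem' := fun r x hx => by
        rw [hsmul]
        exact mul_mem (hB0le r.2) hx } with hFcdef
  obtain ⟨t, ht⟩ := IsNoetherian.noetherian Fc
  have htsub : (t : Set D) ⊆ (Subring.center D : Set D) := by
    intro z hz
    have : z ∈ Fc := ht ▸ Submodule.subset_span hz
    exact this
  have hcenter_cl : Subring.closure (((cset ∪ t : Finset D)) : Set D) = Subring.center D := by
    refine le_antisymm (Subring.closure_le.mpr ?_) ?_
    · rw [Finset.coe_union]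
      exact Set.union_subset hcsub htsub
    · have key : ∀ u, u ∈ Submodule.span B0 (t : Set D) →
          u ∈ Subring.closure (((cset ∪ t : Finset D)) : Set D) := by
        intro u hu
        induction hu using Submodule.span_induction with
      | mem a ha =>
        exact Subring.subset_closure (by
          rw [Finset.coe_union]; exact Set.mem_union_right _ ha)
      | zero => exact zero_mem _
      | add u v hu hv pu pv => exact add_mem pu pv
      | smul r u hu pu =>
        rw [hsmul]
        refine mul_mem ?_ pu
        have : (r : D) ∈ Subring.closure (cset : Set D) := r.2
        exact Subring.closure_mono (by rw [Finset.coe_union]; exact Set.subset_union_left) this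
      exact fun x hx => key x (by rw [ht]; exact hx)
  -- the center is finite
  haveI hFfin : Finite (Subring.center D) := by
    refine finite_of_field_of_closure_eq_top _
      ((fun x : (Subring.center D) => (x : D)) ⁻¹' ((cset ∪ t : Finset D) : Set D)) ?_
      (closure_subtype_eq_top _ _ hcenter_cl)
    exact Set.Finite.preimage (Subtype.coe_injective.injOn) (Finset.finite_toSet _)
  exact Module.finite_of_finite (Subring.center D)


/-- A division ring is *centrally finite* if it is a finite-dimensional
vector space over its own center. -/
def IsCentrallyFinite (E : Type*) [DivisionRing E] : Prop :=
  Module.Finite (Subring.center E) E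

/-- A division ring is *weakly locally finite* if for every finite subset `S`,
the division subring generated by `S` is centrally finite. -/
def IsWeaklyLocallyFinite (D : Type*) [DivisionRing D] : Prop :=
  ∀ S : Finset D, IsCentrallyFinite (Subfield.closure (S : Set D))

/-- A division ring is *algebraic over its center* if every element is a root of a
nonzero polynomial all of whose coefficients lie in the center. -/
def IsAlgebraicOverCenter (D : Type*) [DivisionRing D] : Prop :=
  ∀ x : D, ∃ p : Polynomial D, p ≠ 0 ∧ (∀ i, p.coeff i ∈ Subring.center D) ∧ p.eval x = 0

/-- The multiplicative group of a non-commutative, weakly locally finite division ring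
that is algebraic over its center is not finitely generated. -/
theorem units_not_fg (D : Type*) [DivisionRing D]
    (hnc : ∃ a b : D, a * b ≠ b * a) (hwlf : IsWeaklyLocallyFinite D)
    (halg : IsAlgebraicOverCenter D) : ¬ Group.FG Dˣ := by
  classical
  intro hfg
  obtain ⟨a, b, hab⟩ := hnc
  obtain ⟨S, hS⟩ := hfg.out
  set TD : Finset D := S.image (fun u : Dˣ => (u : D)) ∪
    S.image (fun u : Dˣ => ((u⁻¹ : Dˣ) : D)) with hTDdef
  set E := Subfield.closure (TD : Set D) with hEdef
  have hunit : ∀ u : Dˣ, (u : D) ∈ E := by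
    set H : Subgroup Dˣ :=
      { carrier := {v : Dˣ | (v : D) ∈ E}
        one_mem' := by
          show ((1 : Dˣ) : D) ∈ E
          rw [Units.val_one]; exact one_mem _
        mul_mem' := fun {v w} hv hw => by
          show ((v * w : Dˣ) : D) ∈ E
          rw [Units.val_mul]; exact mul_mem hv hw
        inv_mem' := fun {v} hv => by
          show ((v⁻¹ : Dˣ) : D) ∈ E
          rw [Units.val_inv_eq_inv_val]
          exact inv_mem hv } with hHdef
    intro u
    have hle : Subgroup.closure (S : Set Dˣ) ≤ H := by
      refine Subgroup.closure_le H |>.mpr ?_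
      intro v hv
      show (v : D) ∈ E
      exact Subfield.subset_closure (Finset.mem_coe.mpr
        (Finset.mem_union_left _ (Finset.mem_image.mpr ⟨v, hv, rfl⟩)))
    exact hle (hS ▸ Subgroup.mem_top u)
  have hall : ∀ x : D, x ∈ E := by
    intro x
    rcases eq_or_ne x 0 with rfl | hx
    · exact zero_mem _
    · exact hunit (Units.mk0 x hx)
  have hring : Subring.closure (TD : Set D) = ⊤ := by
    rw [eq_top_iff]
    rintro x -
    rcases eq_or_ne x 0 with rfl | hx
    · exact zero_mem _
    · have hu : (Units.mk0 x hx) ∈ Submonoid.closure ((S : Set Dˣ) ∪ (S : Set Dˣ)⁻¹) := by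
        rw [← Subgroup.closure_toSubmonoid]
        exact hS ▸ Subgroup.mem_top _
      have main : ∀ v : Dˣ, v ∈ Submonoid.closure ((S : Set Dˣ) ∪ (S : Set Dˣ)⁻¹) →
          (v : D) ∈ Subring.closure (TD : Set D) := by
        intro v hv
        induction hv using Submonoid.closure_induction with
        | mem w hw =>
          refine Subring.subset_closure ?_
          rcases hw with hw | hw
          · exact Finset.mem_coe.mpr (Finset.mem_union_left _
              (Finset.mem_image.mpr ⟨w, hw, rfl⟩))
          · have hw' : w⁻¹ ∈ S := Finset.mem_coe.mp (Set.mem_inv.mp hw)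
            exact Finset.mem_coe.mpr (Finset.mem_union_right _
              (Finset.mem_image.mpr ⟨w⁻¹, hw', by simp⟩))
        | one => rw [Units.val_one]; exact one_mem _
        | mul u v hu hv pu pv => rw [Units.val_mul]; exact mul_mem pu pv
      exact main _ hu
  have hE := hwlf TD
  obtain ⟨yE, hyE⟩ := hE.fg_top
  have hcen : ∀ cE : (Subring.center E), ((cE : E) : D) ∈ Subring.center D := by
    intro cE
    rw [Subring.mem_center_iff]
    intro g
    have h1 := Subring.mem_center_iff.mp cE.2 ⟨g, hall g⟩
    exact congrArg Subtype.val h1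
  have hMF : Module.Finite (Subring.center D) D := by
    refine ⟨⟨yE.image (fun w : E => (w : D)), ?_⟩⟩
    rw [eq_top_iff]
    rintro x -
    have hx : (⟨x, hall x⟩ : E) ∈ Submodule.span (Subring.center E) (yE : Set E) := by
      rw [hyE]; trivial
    have main : ∀ z : E, z ∈ Submodule.span (Subring.center E) (yE : Set E) →
        (z : D) ∈ Submodule.span (Subring.center D)
          ((yE.image (fun w : E => (w : D)) : Finset D) : Set D) := by
      intro z hz
      induction hz using Submodule.span_induction with
      | mem w hw =>
        exact Submodule.subset_span (Finset.mem_coe.mpr (Finset.mem_image.mpr ⟨w, hw, rfl⟩))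
      | zero => exact Submodule.zero_mem _
      | add u v hu hv pu pv => exact Submodule.add_mem _ pu pv
      | smul r u hu pu =>
        have h2 : ((r • u : E) : D)
            = (⟨((r : E) : D), hcen r⟩ : Subring.center D) • (u : D) := rfl
        rw [h2]
        exact Submodule.smul_mem _ _ pu
    exact main _ hx
  haveI : Finite D := key_finite D hMF TD hring
  letI : Field D := littleWedderburn D
  exact hab (mul_comm a b)
end

section
/- Let D be a weakly locally finite division ring and let D' denote the derived (commutator) subgroup of the multiplicative group D*. Then the center Z(D') of the group D' is a torsion group, i.e., every element of Z(D') has finite order. -/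
open scoped commutatorElement

lemma monoidHom_commutatorElement_eq_one {G M : Type*} [Group G] [CommMonoid M]
    (g : G →* M) (a b : G) : g ⁅a, b⁆ = 1 := by
  have h1 : g a * g a⁻¹ = 1 := by rw [← map_mul, mul_inv_cancel, map_one]
  have h2 : g b * g b⁻¹ = 1 := by rw [← map_mul, mul_inv_cancel, map_one]
  calc g ⁅a, b⁆ = g a * g b * (g a⁻¹ * g b⁻¹) := by
        simp [commutatorElement_def, map_mul, mul_assoc]
    _ = g a * g a⁻¹ * (g b * g b⁻¹) := mul_mul_mul_comm _ _ _ _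
    _ = 1 := by rw [h1, h2, one_mul]

lemma exists_list_commutators {G : Type*} [Group G] {x : G} (hx : x ∈ commutator G) :
    ∃ l : List (G × G), (l.map fun p => ⁅p.1, p.2⁆).prod = x := by
  rw [commutator_eq_closure] at hx
  have inv_aux : ∀ l : List (G × G),
      ((l.map fun p => ⁅p.1, p.2⁆).prod)⁻¹
        = ((l.reverse.map fun p => (p.2, p.1)).map fun p => ⁅p.1, p.2⁆).prod := by
    intro l
    induction l with
    | nil => simp
    | cons p t ih =>
      simp only [List.map_cons, List.prod_cons, mul_inv_rev, List.reverse_cons,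
        List.map_append, List.prod_append, ih]
      simp [commutatorElement_inv]
  induction hx using Subgroup.closure_induction with
  | mem y hy =>
    obtain ⟨a, b, rfl⟩ := hy
    exact ⟨[(a, b)], by simp⟩
  | one => exact ⟨[], by simp⟩
  | mul y z _ _ hy hz =>
    obtain ⟨l₁, h₁⟩ := hy
    obtain ⟨l₂, h₂⟩ := hz
    exact ⟨l₁ ++ l₂, by simp [h₁, h₂]⟩
  | inv y _ hy =>
    obtain ⟨l, hl⟩ := hy
    exact ⟨l.reverse.map fun p => (p.2, p.1), by rw [← inv_aux, hl]⟩

lemma cbh_central {E : Type*} [DivisionRing E] (K : Subring E)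
    (hinv : ∀ a ∈ K, a⁻¹ ∈ K)
    (hconj : ∀ a ∈ K, ∀ u : E, u ≠ 0 → u * a * u⁻¹ ∈ K)
    {b : E} (hb : b ∉ K) :
    ∀ a ∈ K, ∀ d : E, a * d = d * a := by
  have step1 : ∀ a ∈ K, ∀ c : E, c ∉ K → a * c = c * a := by
    intro a ha c hc
    have hc0 : c ≠ 0 := fun h => hc (h ▸ K.zero_mem)
    have hc1 : (1 : E) + c ≠ 0 := by
      intro h
      have hcn : c = -1 := by
        have := eq_neg_of_add_eq_zero_right h; simpa using this
      exact hc (hcn ▸ K.neg_mem K.one_mem)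
    set k₁ := c * a * c⁻¹ with hk₁
    have hk₁K : k₁ ∈ K := hconj a ha c hc0
    set k₂ := (1 + c) * a * (1 + c)⁻¹ with hk₂
    have hk₂K : k₂ ∈ K := hconj a ha _ hc1
    have e1 : k₁ * c = c * a := by
      rw [hk₁, mul_assoc, inv_mul_cancel₀ hc0, mul_one]
    have e2 : k₂ * (1 + c) = (1 + c) * a := by
      rw [hk₂, mul_assoc, inv_mul_cancel₀ hc1, mul_one]
    have e2' : k₂ + k₂ * c = a + k₁ * c := by
      have h1 : k₂ * (1 + c) = k₂ + k₂ * c := by rw [mul_add, mul_one]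
      have h2 : (1 + c) * a = a + k₁ * c := by rw [add_mul, one_mul, e1]
      rw [← h1, ← h2, e2]
    have e3 : (k₂ - k₁) * c = a - k₂ := by
      have h5 : k₂ * c - k₁ * c = a - k₂ := by
        have h4 : k₂ * c = a + k₁ * c - k₂ := by
          rw [← e2']; abel
        rw [h4]; abel
      rw [sub_mul, h5]
    have hk12 : k₂ = k₁ := by
      by_contra hne
      have hne0 : k₂ - k₁ ≠ 0 := sub_ne_zero.mpr hne
      have hcK : c = (k₂ - k₁)⁻¹ * (a - k₂) := by
        rw [← e3, ← mul_assoc, inv_mul_cancel₀ hne0, one_mul]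
      exact hc (hcK ▸ K.mul_mem (hinv _ (K.sub_mem hk₂K hk₁K)) (K.sub_mem ha hk₂K))
    have hk2a : k₁ = a := by
      have he := e3
      rw [hk12, sub_self, zero_mul] at he
      exact (sub_eq_zero.mp he.symm).symm
    rw [← e1, hk2a]
  intro a ha d
  by_cases hd : d ∈ K
  · by_cases hd0 : d = 0
    · simp [hd0]
    have hb0 : b ≠ 0 := fun h => hb (h ▸ K.zero_mem)
    have hbd : b * d ∉ K := by
      intro hmem
      have hbe : b = b * d * d⁻¹ := by
        rw [mul_assoc, mul_inv_cancel₀ hd0, mul_one]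
      exact hb (hbe ▸ K.mul_mem hmem (hinv _ hd))
    have h1 := step1 a ha _ hbd
    have h2 := step1 a ha b hb
    apply mul_left_cancel₀ hb0
    calc b * (a * d) = (b * a) * d := by rw [mul_assoc]
      _ = (a * b) * d := by rw [h2]
      _ = a * (b * d) := by rw [mul_assoc]
      _ = (b * d) * a := h1
      _ = b * (d * a) := by rw [mul_assoc]
  · exact step1 a ha d hd

/-- Lift a unit of `D` whose value lies in a subfield `E` to a unit of `E`. -/
def liftUnit {D : Type*} [DivisionRing D] (E : Subfield D) (u : Dˣ) (hu : (u : D) ∈ E) : Eˣ where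
  val := ⟨(u : D), hu⟩
  inv := ⟨((u : D))⁻¹, E.inv_mem hu⟩
  val_inv := Subtype.ext (mul_inv_cancel₀ u.ne_zero)
  inv_val := Subtype.ext (inv_mul_cancel₀ u.ne_zero)

lemma map_liftUnit {D : Type*} [DivisionRing D] (E : Subfield D) (u : Dˣ) (hu : (u : D) ∈ E) :
    Units.map (E.subtype.toMonoidHom) (liftUnit E u hu) = u := Units.ext rfl

lemma lift_prod {D : Type*} [DivisionRing D] (E : Subfield D) :
    ∀ l : List (Dˣ × Dˣ), (∀ p ∈ l, ((p.1 : Dˣ) : D) ∈ E ∧ ((p.2 : Dˣ) : D) ∈ E) →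
    ∃ w : Eˣ, w ∈ commutator Eˣ ∧
      ((w : E) : D) = (((l.map fun p => ⁅p.1, p.2⁆).prod : Dˣ) : D) := by
  intro l
  induction l with
  | nil => exact fun _ => ⟨1, Subgroup.one_mem _, by simp⟩
  | cons p t ih =>
    intro hmem
    obtain ⟨w, hw, hwv⟩ := ih (fun q hq => hmem q (List.mem_cons_of_mem _ hq))
    have h1 := (hmem p (List.mem_cons_self)).1
    have h2 := (hmem p (List.mem_cons_self)).2
    refine ⟨⁅liftUnit E p.1 h1, liftUnit E p.2 h2⁆ * w, ?_, ?_⟩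
    · exact Subgroup.mul_mem _
        (commutator_def (G := Eˣ) ▸ Subgroup.commutator_mem_commutator
          (Subgroup.mem_top _) (Subgroup.mem_top _)) hw
    · have hmap : Units.map (E.subtype.toMonoidHom)
          ⁅liftUnit E p.1 h1, liftUnit E p.2 h2⁆ = ⁅p.1, p.2⁆ := by
        rw [map_commutatorElement, map_liftUnit, map_liftUnit]
      have hval : (((⁅liftUnit E p.1 h1, liftUnit E p.2 h2⁆ : Eˣ) : E) : D)
          = ((⁅p.1, p.2⁆ : Dˣ) : D) := by
        have := congrArg (fun u : Dˣ => (u : D)) hmap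
        exact this
      simp only [List.map_cons, List.prod_cons, Units.val_mul]
      push_cast
      rw [hval, hwv]

set_option maxHeartbeats 1600000 in
set_option synthInstance.maxHeartbeats 400000 in
theorem center_commutator_torsion' (D : Type*) [DivisionRing D]
    (h : ∀ S : Finset D,
      Module.Finite (Subring.center (Subfield.closure (S : Set D))) (Subfield.closure (S : Set D))) :
    ∀ x ∈ commutator Dˣ, (∀ y ∈ commutator Dˣ, x * y = y * x) →
      ∃ m : ℕ, 0 < m ∧ x ^ m = 1 := by
  classical
  intro x hx hcomm
  obtain ⟨l, hl⟩ := exists_list_commutators hx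
  set S : Finset D :=
    (l.map fun p => ((p.1 : Dˣ) : D)).toFinset ∪ (l.map fun p => ((p.2 : Dˣ) : D)).toFinset
      with hS
  set E := Subfield.closure (S : Set D) with hE
  have hmem : ∀ p ∈ l, ((p.1 : Dˣ) : D) ∈ E ∧ ((p.2 : Dˣ) : D) ∈ E := by
    intro p hp
    constructor
    · refine Subfield.subset_closure ?_
      simp only [hS, Finset.coe_union, Set.mem_union, Finset.mem_coe, List.mem_toFinset,
        List.mem_map]
      exact Or.inl ⟨p, hp, rfl⟩
    · refine Subfield.subset_closure ?_
      simp only [hS, Finset.coe_union, Set.mem_union, Finset.mem_coe, List.mem_toFinset,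
        List.mem_map]
      exact Or.inr ⟨p, hp, rfl⟩
  obtain ⟨w, hwmem, hwval⟩ := lift_prod E l hmem
  rw [hl] at hwval
  -- `w` commutes with all commutators of `Eˣ`
  have hwcomm : ∀ u v : Eˣ, ((⁅u, v⁆ : Eˣ) : E) * (w : E) = (w : E) * ((⁅u, v⁆ : Eˣ) : E) := by
    intro u v
    have hmem' : Units.map (E.subtype.toMonoidHom) ⁅u, v⁆ ∈ commutator Dˣ := by
      rw [map_commutatorElement]
      exact commutator_def (G := Dˣ) ▸ Subgroup.commutator_mem_commutator
        (Subgroup.mem_top _) (Subgroup.mem_top _)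
    have hcx := hcomm _ hmem'
    have hv := congrArg (fun u : Dˣ => (u : D)) hcx
    simp only [Units.val_mul, Units.coe_map, RingHom.toMonoidHom_eq_coe,
      MonoidHom.coe_coe] at hv
    apply Subtype.ext
    have hsub : (E.subtype ((⁅u, v⁆ : Eˣ) : E) : D) = (((⁅u, v⁆ : Eˣ) : E) : D) := rfl
    rw [hsub] at hv
    push_cast
    rw [hwval, ← hv]
  -- the centralizer of commutators
  set T : Set E := {c : E | ∃ u v : Eˣ, ((⁅u, v⁆ : Eˣ) : E) = c} with hT
  set C := Subring.centralizer T with hC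
  have hwC : (w : E) ∈ C := by
    rw [hC, Subring.mem_centralizer_iff]
    rintro c ⟨u, v, rfl⟩
    exact hwcomm u v
  have hinvC : ∀ a ∈ C, a⁻¹ ∈ C := by
    intro a ha
    rw [hC, Subring.mem_centralizer_iff] at ha ⊢
    intro c hc
    have hca : Commute c a := ha c hc
    exact hca.inv_right₀
  have hconjC : ∀ a ∈ C, ∀ u : E, u ≠ 0 → u * a * u⁻¹ ∈ C := by
    intro a ha u hu
    rw [hC, Subring.mem_centralizer_iff]
    rintro c ⟨v, v', rfl⟩
    set g : Eˣ := Units.mk0 u hu with hg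
    have hTc : ((⁅(MulAut.conj g)⁻¹ v, (MulAut.conj g)⁻¹ v'⁆ : Eˣ) : E) ∈ T :=
      ⟨_, _, rfl⟩
    have ha' := Subring.mem_centralizer_iff.mp ha _ hTc
    have hcc : ⁅(MulAut.conj g)⁻¹ v, (MulAut.conj g)⁻¹ v'⁆ = g⁻¹ * ⁅v, v'⁆ * g := by
      rw [← map_commutatorElement ((MulAut.conj g)⁻¹ : MulAut Eˣ)]
      rw [← map_inv MulAut.conj g, MulAut.conj_apply]
      simp
    rw [hcc] at ha'
    have hval : ((g⁻¹ * ⁅v, v'⁆ * g : Eˣ) : E) = u⁻¹ * ((⁅v, v'⁆ : Eˣ) : E) * u := by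
      simp [hg]
    rw [hval] at ha'
    have := congrArg (fun t => u * t * u⁻¹) ha'
    simp only [mul_assoc] at this ⊢
    simpa [mul_inv_cancel_left₀ hu, inv_mul_cancel_left₀ hu,
      mul_inv_cancel₀ hu, inv_mul_cancel₀ hu, mul_assoc] using this
  -- x (as element of E) is central in E
  have hwcen : (w : E) ∈ Subring.center E := by
    by_cases hall : ∀ y : E, y ∈ C
    · have hcen : ∀ u v : Eˣ, ((⁅u, v⁆ : Eˣ) : E) ∈ Subring.center E := by
        intro u v
        rw [Subring.mem_center_iff]
        intro gg
        exact (Subring.mem_centralizer_iff.mp (hall gg) _ ⟨u, v, rfl⟩).symm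
      set Zu : Subgroup Eˣ :=
        { carrier := {u : Eˣ | (u : E) ∈ Subring.center E}
          one_mem' := by
            simp only [Set.mem_setOf_eq, Units.val_one]
            exact Subring.one_mem _
          mul_mem' := by
            intro a b ha hb
            simp only [Set.mem_setOf_eq, Units.val_mul] at *
            exact Subring.mul_mem _ ha hb
          inv_mem' := by
            intro a ha
            simp only [Set.mem_setOf_eq] at *
            rw [Units.val_inv_eq_inv_val]
            rw [Subring.mem_center_iff] at ha ⊢
            intro gg
            have hga : Commute gg (a : E) := ha gg
            exact hga.inv_right₀ } with hZu
      have hle : commutator Eˣ ≤ Zu := by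
        rw [commutator_eq_closure]
        apply Subgroup.closure_le _ |>.mpr
        rintro y ⟨u, v, rfl⟩
        exact hcen u v
      exact hle hwmem
    · push_neg at hall
      obtain ⟨b, hbC⟩ := hall
      rw [Subring.mem_center_iff]
      intro gg
      exact (cbh_central C hinvC hconjC hbC (w : E) hwC gg).symm
  -- the norm argument
  have hfin : Module.Finite (Subring.center E) E := h S
  haveI := hfin
  haveI : NoZeroSMulDivisors (Subring.center E) E := by
    refine ⟨fun {c y} hcx => ?_⟩
    by_cases hc : c = 0
    · exact Or.inl hc
    · refine Or.inr ?_
      have h2 := congrArg (fun t => c⁻¹ • t) hcx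
      simpa [smul_smul, inv_mul_cancel₀ hc] using h2
  set n := Module.finrank (Subring.center E) E with hn
  have hnpos : 0 < n := Module.finrank_pos
  set z : Subring.center E := ⟨(w : E), hwcen⟩ with hz
  have hzmap : algebraMap (Subring.center E) E z = (w : E) := rfl
  have hnorm1 : Algebra.norm (Subring.center E) ((w : Eˣ) : E) = 1 := by
    set g : Eˣ →* (Subring.center E) :=
      (Algebra.norm (Subring.center E)).comp (Units.coeHom E) with hgdef
    set Ksub : Subgroup Eˣ :=
      { carrier := {u : Eˣ | g u = 1}
        one_mem' := by simp
        mul_mem' := by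
          intro a b ha hb
          simp only [Set.mem_setOf_eq] at *
          rw [map_mul, ha, hb, one_mul]
        inv_mem' := by
          intro a ha
          simp only [Set.mem_setOf_eq] at *
          have : g a * g a⁻¹ = 1 := by rw [← map_mul, mul_inv_cancel, map_one]
          rwa [ha, one_mul] at this } with hKsub
    have hle : commutator Eˣ ≤ Ksub := by
      rw [commutator_eq_closure]
      apply Subgroup.closure_le _ |>.mpr
      rintro y ⟨u, v, rfl⟩
      exact monoidHom_commutatorElement_eq_one g u v
    exact hle hwmem
  have hpow : z ^ n = 1 := by
    have := Algebra.norm_algebraMap (S := E) z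
    rw [hzmap, hnorm1] at this
    rw [hn]
    exact this.symm
  refine ⟨n, hnpos, ?_⟩
  have hE1 : ((w : E) : E) ^ n = 1 := by
    have := congrArg (Subtype.val) hpow
    push_cast at this
    exact this
  have hD1 : ((x : Dˣ) : D) ^ n = 1 := by
    have := congrArg (fun t : E => (t : D)) hE1
    push_cast at this
    rwa [hwval] at this
  ext
  push_cast
  exact hD1

/-- In a weakly locally finite division ring, the center of the derived subgroup `D'`
of `D*` is a torsion group: every element of `Z(D')` has finite order. -/
theorem center_commutator_torsion (D : Type*) [DivisionRing D]
    (h : IsWeaklyLocallyFinite D) :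
    ∀ x ∈ commutator Dˣ, (∀ y ∈ commutator Dˣ, x * y = y * x) →
      ∃ m : ℕ, 0 < m ∧ x ^ m = 1 := by
  exact center_commutator_torsion' D (fun S => h S)
end

section
/- Let D be a weakly locally finite division ring with center F. If for all a, b ∈ D* there exists a positive integer n (depending on a and b) such that (aba⁻¹b⁻¹)ⁿ ∈ F, then D is commutative. -/
open Polynomial

set_option maxHeartbeats 1600000
set_option synthInstance.maxHeartbeats 400000

namespace CCR
variable {E : Type*} [DivisionRing E]



lemma inv_mem_center {z : E} (hz : z ∈ Subring.center E) : z⁻¹ ∈ Subring.center E := by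
  rw [Subring.mem_center_iff] at hz ⊢
  exact fun g => (Commute.inv_right₀ (hz g))

lemma val_comm (a b : Eˣ) :
    ((a * b * a⁻¹ * b⁻¹ : Eˣ) : E) = (a : E) * b * (a : E)⁻¹ * (b : E)⁻¹ := by
  push_cast
  rfl

/-- Hua-style lemma: if all commutators of `a` are central then `a` is central. -/
lemma hua (a : Eˣ) (h : ∀ b : Eˣ, ((a * b * a⁻¹ * b⁻¹ : Eˣ) : E) ∈ Subring.center E) :
    (a : E) ∈ Subring.center E := by
  rw [Subring.mem_center_iff]
  intro y
  rcases eq_or_ne y 0 with rfl | hy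
  · simp
  set α : E := (a : E) with hα
  have hα0 : α ≠ 0 := Units.ne_zero a
  have hcZ : α * y * α⁻¹ * y⁻¹ ∈ Subring.center E := by
    have := h (Units.mk0 y hy)
    rw [val_comm] at this
    simpa using this
  set c : E := α * y * α⁻¹ * y⁻¹ with hc
  have h1 : α * y * α⁻¹ = c * y := by
    rw [hc, mul_assoc _ _ y, inv_mul_cancel₀ hy, mul_one]
  rcases eq_or_ne (y + 1) 0 with hy1 | hy1
  · have hym : y = -1 := by rwa [add_eq_zero_iff_eq_neg] at hy1
    subst hym; simp
  · have hc'Z : α * (y+1) * α⁻¹ * (y+1)⁻¹ ∈ Subring.center E := by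
      have := h (Units.mk0 (y+1) hy1)
      rw [val_comm] at this
      simpa using this
    set c' : E := α * (y+1) * α⁻¹ * (y+1)⁻¹ with hc'
    have h2 : α * (y+1) * α⁻¹ = c' * (y+1) := by
      rw [hc', mul_assoc _ _ (y+1), inv_mul_cancel₀ hy1, mul_one]
    have h3 : c * y + 1 = c' * y + c' := by
      have expand : α * (y + 1) * α⁻¹ = α * y * α⁻¹ + 1 := by
        rw [mul_add, mul_one, add_mul, mul_inv_cancel₀ hα0]
      rw [expand, h1] at h2
      rw [h2, mul_add, mul_one]
    rcases eq_or_ne c c' with hcc | hcc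
    · rw [hcc] at h3
      have hc1 : c' = 1 := by
        have h4 : c' * y + 1 = c' * y + c' := h3
        exact (add_left_cancel h4).symm
      have hcone : c = 1 := by rw [hcc, hc1]
      have hfix : α * y * α⁻¹ = y := by rw [h1, hcone, one_mul]
      calc y * α = (α * y * α⁻¹) * α := by rw [hfix]
        _ = α * y := by rw [mul_assoc, inv_mul_cancel₀ hα0, mul_one]
    · have hsub : (c - c') * y = c' - 1 := by
        rw [sub_mul, sub_eq_sub_iff_add_eq_add, add_comm c', h3]
      have hdz : c - c' ∈ Subring.center E := Subring.sub_mem _ hcZ hc'Z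
      have hdz0 : c - c' ≠ 0 := sub_ne_zero.mpr hcc
      have hyval : y = (c - c')⁻¹ * (c' - 1) := by
        rw [← hsub, ← mul_assoc, inv_mul_cancel₀ hdz0, one_mul]
      have hyZ : y ∈ Subring.center E := by
        rw [hyval]
        exact Subring.mul_mem _ (inv_mem_center hdz)
          (Subring.sub_mem _ hc'Z (Subring.one_mem _))
      exact (Subring.mem_center_iff.1 hyZ α).symm



/-- determinant of left multiplication, as a monoid hom -/
noncomputable def Nrm (E : Type*) [DivisionRing E] : E →* Subring.center E where
  toFun e := LinearMap.det (LinearMap.mulLeft (Subring.center E) e)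
  map_one' := by
    show LinearMap.det (LinearMap.mulLeft (Subring.center E) (1:E)) = 1
    rw [LinearMap.mulLeft_one, LinearMap.det_id]
  map_mul' x y := by
    show LinearMap.det (LinearMap.mulLeft (Subring.center E) (x*y)) = _
    rw [LinearMap.mulLeft_mul, LinearMap.det_comp]

lemma Nrm_central (z : Subring.center E) :
    Nrm E (z : E) = z ^ Module.finrank (Subring.center E) E := by
  have hml : LinearMap.mulLeft (Subring.center E) (z : E) = z • LinearMap.id := by
    ext e
    show (z : E) * e = z • e
    rfl
  show LinearMap.det _ = _
  rw [hml, LinearMap.det_smul, LinearMap.det_id, mul_one]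

/-- every commutator whose power is central is torsion -/
lemma comm_torsion [Module.Finite (Subring.center E) E] (u v : Eˣ) (m : ℕ) (hm : 0 < m)
    (hmem : ((u * v * u⁻¹ * v⁻¹ : Eˣ) : E) ^ m ∈ Subring.center E) :
    (u * v * u⁻¹ * v⁻¹) ^ (m * Module.finrank (Subring.center E) E) = 1 ∧
      0 < m * Module.finrank (Subring.center E) E := by
  set D := Module.finrank (Subring.center E) E with hD
  have hDpos : 0 < D := Module.finrank_pos
  have hNw : Nrm E ((u * v * u⁻¹ * v⁻¹ : Eˣ) : E) = 1 := by
    have hval : ((u * v * u⁻¹ * v⁻¹ : Eˣ) : E)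
        = (u : E) * v * ((u⁻¹ : Eˣ) : E) * ((v⁻¹ : Eˣ) : E) := by push_cast; rfl
    have h1 : Nrm E ((u : E)) * Nrm E ((u⁻¹ : Eˣ) : E) = 1 := by
      rw [← map_mul]; norm_cast; simp
    have h2 : Nrm E ((v : E)) * Nrm E ((v⁻¹ : Eˣ) : E) = 1 := by
      rw [← map_mul]; norm_cast; simp
    rw [hval, map_mul, map_mul, map_mul]
    calc Nrm E (u : E) * Nrm E (v : E) * Nrm E ((u⁻¹ : Eˣ) : E) * Nrm E ((v⁻¹ : Eˣ) : E)
        = (Nrm E (u : E) * Nrm E ((u⁻¹ : Eˣ) : E)) * (Nrm E (v : E) * Nrm E ((v⁻¹ : Eˣ) : E)) := by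
          ring
      _ = 1 := by rw [h1, h2, mul_one]
  refine ⟨?_, by positivity⟩
  set z : Subring.center E := ⟨((u * v * u⁻¹ * v⁻¹ : Eˣ) : E) ^ m, hmem⟩ with hz
  have hzD : z ^ D = 1 := by
    have h3 : Nrm E (z : E) = z ^ D := Nrm_central z
    have h4 : (z : E) = ((u * v * u⁻¹ * v⁻¹ : Eˣ) : E) ^ m := rfl
    rw [h4, map_pow, hNw, one_pow] at h3
    exact h3.symm
  apply Units.ext
  rw [Units.val_pow_eq_pow_val, pow_mul]
  have h5 : ((u * v * u⁻¹ * v⁻¹ : Eˣ) : E) ^ m = (z : E) := rfl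
  rw [h5]
  have h6 : ((z : E)) ^ D = ((z ^ D : Subring.center E) : E) := by
    rw [SubmonoidClass.coe_pow]
  rw [h6, hzD]
  rfl





lemma herstein [Module.Finite (Subring.center E) E] {c : Eˣ}
    (hc : (c : E) ∉ Subring.center E) (htor : IsOfFinOrder c) :
    ∃ (x : Eˣ) (j : ℕ), x⁻¹ * c * x = c ^ j ∧ x⁻¹ * c * x ≠ c := by
  classical
  set n := orderOf c with hn
  have hn0 : 0 < n := htor.orderOf_pos
  have hne1 : c ≠ 1 := by
    intro h; apply hc; rw [h]
    simpa using Subring.one_mem (Subring.center E)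
  have hn1 : 1 < n := by
    have : n ≠ 1 := fun h => hne1 (orderOf_eq_one_iff.mp (by rw [← hn, h]))
    omega
  have hcn : c ^ n = 1 := pow_orderOf_eq_one c
  have hvn : (c : E) ^ n = 1 := by
    have := congrArg (Units.val) hcn; push_cast at this; exact this
  -- the field K = Z(c)
  set K := Algebra.adjoin (Subring.center E) {(c : E)} with hK
  letI : CommRing ↥K := Algebra.adjoinCommRingOfComm _ (by
    rintro a ha b hb
    simp only [Set.mem_singleton_iff] at ha hb
    rw [ha, hb])
  have hint : IsIntegral (Subring.center E) ((c : E)) := by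
    refine ⟨X ^ n - C 1, Polynomial.monic_X_pow_sub_C _ (by omega), ?_⟩
    simp [hvn]
  haveI : Module.Finite (Subring.center E) ↥K :=
    ⟨(Submodule.fg_top _).mpr hint.fg_adjoin_singleton⟩
  haveI : Algebra.IsIntegral (Subring.center E) ↥K := Algebra.IsIntegral.of_finite _ _
  have hinj : Function.Injective (algebraMap (Subring.center E) ↥K) := RingHom.injective _
  have hKfield : IsField ↥K := (Algebra.IsIntegral.isField_iff_isField hinj).mp (Field.toIsField _)
  letI : Field ↥K := hKfield.toField
  haveI : Module.Finite ↥K E := Module.Finite.of_restrictScalars_finite (Subring.center E) ↥K E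
  -- commutation of K with c
  have hcomm : ∀ x ∈ K, x * (c : E) = (c : E) * x := by
    intro x hx
    induction hx using Algebra.adjoin_induction with
    | mem y hy => simp only [Set.mem_singleton_iff] at hy; rw [hy]
    | algebraMap r => exact (Subring.mem_center_iff.mp r.2 ((c : E))).symm
    | add x y hx hy ihx ihy => rw [add_mul, mul_add, ihx, ihy]
    | mul x y hx hy ihx ihy => rw [mul_assoc, ihy, ← mul_assoc, ihx, mul_assoc]
  -- γ = c as an element of K
  set γ : ↥K := ⟨(c : E), Algebra.self_mem_adjoin_singleton _ _⟩ with hγ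
  have hγn : γ ^ n = 1 := by ext; push_cast; exact hvn
  set vK : ↥K →* E := { toFun := Subtype.val, map_one' := rfl, map_mul' := fun _ _ => rfl }
    with hvK
  have hγord : orderOf γ = n := by
    have h1 : orderOf ((c : E)) = n := by rw [orderOf_units, hn]
    have h2 : orderOf γ = orderOf (vK γ) := (orderOf_injective vK Subtype.val_injective γ).symm
    rw [h2]; exact h1
  have hprim : IsPrimitiveRoot γ n := by
    have h := IsPrimitiveRoot.orderOf γ
    rwa [hγord] at h
  have hc0 : (c : E) ≠ 0 := Units.ne_zero c
  -- conjugation as K-linear map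
  set φ : E →ₗ[↥K] E := {
    toFun := fun e => (c : E) * e * ((c : E))⁻¹
    map_add' := fun e f => by
      show (c : E) * (e + f) * ((c : E))⁻¹ = (c:E) * e * _ + (c:E) * f * _
      rw [mul_add, add_mul]
    map_smul' := fun k e => by
      show (c : E) * ((k : E) * e) * _ = (k : E) * ((c:E) * e * _)
      rw [← mul_assoc, ← hcomm (k : E) k.2, mul_assoc, mul_assoc, mul_assoc] } with hφ
  have hφapp : ∀ e, φ e = (c : E) * e * ((c : E))⁻¹ := fun _ => rfl
  have hφpow : ∀ (m : ℕ) (e : E), ((φ ^ m) e) = (c : E) ^ m * e * ((c : E) ^ m)⁻¹ := by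
    intro m
    induction m with
    | zero => intro e; simp
    | succ m ih =>
      intro e
      rw [pow_succ, Module.End.mul_apply, hφapp e, ih]
      rw [pow_succ, mul_inv_rev]
      simp [mul_assoc]
  have hφn : φ ^ n = 1 := by
    apply LinearMap.ext
    intro e
    rw [hφpow, hvn]
    simp
  -- the factored polynomial identity
  have hfact : (X ^ n - 1 : (↥K)[X]) = ∏ ζ ∈ nthRootsFinset n (1 : ↥K), (X - C ζ) :=
    X_pow_sub_one_eq_prod hn0 hprim
  set T := Polynomial.aeval (R := ↥K) φ with hT
  have haeval : T ((X : (↥K)[X]) ^ n - 1) = 0 := by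
    rw [map_sub, map_pow, aeval_X, map_one, hφn, sub_self]
  have hTfac : ∀ (ζ : ↥K), T (X - C ζ) = φ - algebraMap (↥K) (Module.End (↥K) E) ζ := by
    intro ζ
    rw [map_sub, aeval_X, aeval_C]
  have key : ∀ s : Finset ↥K, (∀ ζ ∈ s, Function.Injective (T (X - C ζ))) →
      Function.Injective (T (∏ ζ ∈ s, ((X : (↥K)[X]) - C ζ))) := by
    intro s
    induction s using Finset.induction with
    | empty => intro _; simp only [Finset.prod_empty, map_one]
               exact fun a b h => by simpa using h
    | insert a s' hnotmem ih =>
      intro hall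
      rw [Finset.prod_insert hnotmem, map_mul]
      have h1 := hall a (Finset.mem_insert_self a s')
      have h2 := ih (fun ζ hζ => hall ζ (Finset.mem_insert_of_mem hζ))
      rw [Module.End.mul_eq_comp, LinearMap.coe_comp]
      exact h1.comp h2
  by_cases hinjall : ∀ ζ ∈ nthRootsFinset n (1 : ↥K), ζ ≠ 1 → Function.Injective (T (X - C ζ))
  · -- then φ = id, contradiction with c noncentral
    exfalso
    have h1mem : (1 : ↥K) ∈ nthRootsFinset n (1 : ↥K) := Polynomial.one_mem_nthRootsFinset hn0
    have hsplit : ((X : (↥K)[X]) - C 1) * ∏ ζ ∈ (nthRootsFinset n (1 : ↥K)).erase 1,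
        ((X : (↥K)[X]) - C ζ) = ∏ ζ ∈ nthRootsFinset n (1 : ↥K), ((X : (↥K)[X]) - C ζ) :=
      Finset.mul_prod_erase _ (fun ζ => (X : (↥K)[X]) - C ζ) h1mem
    have hzero : T (((X : (↥K)[X]) - C 1)) ∘ₗ
        T (∏ ζ ∈ (nthRootsFinset n (1 : ↥K)).erase 1, ((X : (↥K)[X]) - C ζ)) = 0 := by
      rw [← Module.End.mul_eq_comp, ← map_mul, hsplit, ← hfact]
      simpa using haeval
    have hginj : Function.Injective
        (T (∏ ζ ∈ (nthRootsFinset n (1 : ↥K)).erase 1, ((X : (↥K)[X]) - C ζ))) := by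
      apply key
      intro ζ hζ
      exact hinjall ζ (Finset.mem_of_mem_erase hζ) (Finset.ne_of_mem_erase hζ)
    have hgsurj : Function.Surjective
        (T (∏ ζ ∈ (nthRootsFinset n (1 : ↥K)).erase 1, ((X : (↥K)[X]) - C ζ))) :=
      (LinearMap.injective_iff_surjective).1 hginj
    have hφid : ∀ e : E, φ e = e := by
      intro e
      obtain ⟨y, hy⟩ := hgsurj e
      have h0 : (T ((X : (↥K)[X]) - C 1)) e = 0 := by
        rw [← hy, ← LinearMap.comp_apply, hzero]; rfl
      rw [hTfac] at h0
      have h1 : φ e - e = 0 := by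
        have := h0
        rwa [LinearMap.sub_apply, Module.algebraMap_end_apply, one_smul] at this
      have := sub_eq_zero.mp h1
      exact this
    apply hc
    rw [Subring.mem_center_iff]
    intro g
    have := hφid g
    rw [hφapp] at this
    calc g * (c : E) = ((c:E) * g * ((c:E))⁻¹) * (c : E) := by rw [this]
      _ = (c : E) * g := by rw [mul_assoc, inv_mul_cancel₀ hc0, mul_one]
  · -- get an eigenvector
    push_neg at hinjall
    obtain ⟨ζ, hζmem, hζne, hζninj⟩ := hinjall
    rw [hTfac] at hζninj
    have hker : LinearMap.ker (φ - algebraMap (↥K) (Module.End (↥K) E) ζ) ≠ ⊥ := by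
      intro h; exact hζninj (LinearMap.ker_eq_bot.mp h)
    obtain ⟨e, he, he0⟩ := (Submodule.ne_bot_iff _).mp hker
    have heig : (c : E) * e * ((c : E))⁻¹ = (ζ : E) * e := by
      rw [LinearMap.mem_ker, LinearMap.sub_apply, Module.algebraMap_end_apply,
        sub_eq_zero] at he
      exact he
    -- identify ζ as a power of γ
    have hS'sub : (Finset.range n).image (fun i => γ ^ i) ⊆ nthRootsFinset n (1 : ↥K) := by
      intro z hz
      simp only [Finset.mem_image, Finset.mem_range] at hz
      obtain ⟨i, hi, rfl⟩ := hz
      rw [Polynomial.mem_nthRootsFinset hn0, ← pow_mul, mul_comm, pow_mul, hγn, one_pow]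
    have hcard : ((Finset.range n).image (fun i => γ ^ i)).card = n := by
      rw [Finset.card_image_of_injOn, Finset.card_range]
      intro a ha b hb hab
      have ha' : a ∈ Set.Iio (orderOf γ) := by
        simp only [Finset.coe_range, Set.mem_Iio] at ha ⊢; rw [hγord]; exact ha
      have hb' : b ∈ Set.Iio (orderOf γ) := by
        simp only [Finset.coe_range, Set.mem_Iio] at hb ⊢; rw [hγord]; exact hb
      exact pow_injOn_Iio_orderOf ha' hb' hab
    have hSeq : (Finset.range n).image (fun i => γ ^ i) = nthRootsFinset n (1 : ↥K) :=
      Finset.eq_of_subset_of_card_le hS'sub (by rw [hcard, hprim.card_nthRootsFinset])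
    have hζS : ζ ∈ (Finset.range n).image (fun i => γ ^ i) := hSeq ▸ hζmem
    obtain ⟨i, hi, hγi⟩ := Finset.mem_image.mp hζS
    have hin : i < n := Finset.mem_range.mp hi
    have hi0 : i ≠ 0 := by
      rintro rfl
      simp only [pow_zero] at hγi
      exact hζne hγi.symm
    have hvζ : (ζ : E) = (c : E) ^ i := by
      rw [← hγi]; push_cast; rfl
    -- build the unit x
    set x : Eˣ := Units.mk0 e he0 with hx
    have hxv : (x : E) = e := rfl
    have hrel : (c : E) * e = (c : E) ^ i * e * (c : E) := by
      calc (c : E) * e = ((c : E) * e * ((c : E))⁻¹) * (c : E) := by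
            rw [mul_assoc, inv_mul_cancel₀ hc0, mul_one]
        _ = ((ζ : E) * e) * (c : E) := by rw [heig]
        _ = (c : E) ^ i * e * (c : E) := by rw [hvζ]
    have hurel : c * x = c ^ i * x * c := by
      apply Units.ext; push_cast; exact hrel
    set k := n + 1 - i with hk
    have hk2 : 2 ≤ k := by omega
    have hkn : k ≤ n := by omega
    have hck : c ^ k * x = x * c := by
      have h1 : c ^ k = c ^ (n - i) * c := by
        rw [← pow_succ]; congr 1; omega
      rw [h1, mul_assoc, hurel, ← mul_assoc, ← mul_assoc, ← pow_add]
      have h2 : n - i + i = n := by omega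
      rw [h2, hcn, one_mul]
    have hcxc : x * c * x⁻¹ = c ^ k := by
      rw [← hck, mul_assoc, mul_inv_cancel, mul_one]
    set A := MulAut.conj (x⁻¹ : Eˣ) with hA
    have hdval : A c = x⁻¹ * c * x := by
      simp [hA, MulAut.conj_apply]
    have hdk : (A c) ^ k = c := by
      rw [← map_pow, ← hcxc]
      simp only [hA, MulAut.conj_apply]
      group
    have hdord : orderOf (A c) = n := by
      have h := orderOf_injective A.toMonoidHom A.injective c
      simpa [hn] using h
    have hgcd : Nat.gcd n k = 1 := by
      have h1 : orderOf ((A c) ^ k) = n := by rw [hdk, hn]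
      have h2 : orderOf ((A c) ^ k) = orderOf (A c) / Nat.gcd (orderOf (A c)) k :=
        orderOf_pow' _ (by omega)
      rw [hdord, h1] at h2
      have hd : Nat.gcd n k ∣ n := Nat.gcd_dvd_left _ _
      rcases Nat.div_eq_self.mp h2.symm with h | h
      · omega
      · exact h
    have hcop : Nat.Coprime k n := Nat.Coprime.symm hgcd
    obtain ⟨m, -, hm⟩ := Nat.exists_mul_mod_eq_one_of_coprime hcop hn1
    have hAn : (A c) ^ n = 1 := by rw [← hdord]; exact pow_orderOf_eq_one _
    have hdm : A c = c ^ m := by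
      have h1 : (A c) ^ (k * m) = c ^ m := by rw [pow_mul, hdk]
      have h2 : (A c) ^ (k * m) = A c := by
        have h3 : (A c) ^ (k * m) = (A c) ^ (n * (k * m / n) + k * m % n) := by
          congr 1
          exact (Nat.div_add_mod (k * m) n).symm
        rw [h3, pow_add, pow_mul, hAn, one_pow, one_mul, hm, pow_one]
      rw [← h2, h1]
    refine ⟨x, m, ?_, ?_⟩
    · rw [← hdval]; exact hdm
    · rw [← hdval]
      intro hEq
      rw [hEq] at hdk
      have hk1 : c ^ (k - 1) = 1 := by
        have h4 : c ^ (k - 1) * c = 1 * c := by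
          rw [← pow_succ, one_mul]
          have : k - 1 + 1 = k := by omega
          rw [this, hdk]
        exact mul_right_cancel h4
      have h5 : n ∣ (k - 1) := orderOf_dvd_of_pow_eq_one hk1
      have h6 : n ≤ k - 1 := Nat.le_of_dvd (by omega) h5
      omega





/-- arithmetic: numbers with small totient divide a fixed factorial -/
lemma tot_bound {N d : ℕ} (hN : 0 < N) (hd : 0 < d) (h : N.totient ≤ d) :
    N ∣ (2 * d).factorial := by
  have hfac : (2 * d).factorial ≠ 0 := Nat.factorial_ne_zero _
  rw [← Nat.factorization_le_iff_dvd hN.ne' hfac]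
  rw [Finsupp.le_def]
  intro q
  by_cases hq : q.Prime
  · set a := N.factorization q with ha
    rcases Nat.eq_zero_or_pos a with h0 | hapos
    · simp [← ha, h0]
    · have hqa : q ^ a ∣ N := Nat.ordProj_dvd N q
      have htot : (q ^ a).totient ∣ N.totient := Nat.totient_dvd_of_dvd hqa
      have htotle : (q ^ a).totient ≤ d :=
        le_trans (Nat.le_of_dvd (Nat.totient_pos.mpr hN) htot) h
      have hform : (q ^ a).totient = q ^ (a - 1) * (q - 1) := Nat.totient_prime_pow hq hapos
      have hq2 : 2 ≤ q := hq.two_le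
      have hle : q ^ a ≤ 2 * d := by
        have h1 : q ^ a = q ^ (a - 1) * q := by
          rw [← pow_succ]; congr 1; omega
        have h2 : q ≤ 2 * (q - 1) := by omega
        calc q ^ a = q ^ (a - 1) * q := h1
          _ ≤ q ^ (a - 1) * (2 * (q - 1)) := by
              exact Nat.mul_le_mul_left _ h2
          _ = 2 * (q ^ (a - 1) * (q - 1)) := by ring
          _ = 2 * (q ^ a).totient := by rw [hform]
          _ ≤ 2 * d := by omega
      have hdvd : q ^ a ∣ (2 * d).factorial :=
        Nat.dvd_factorial (pow_pos hq.pos _) hle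
      exact (Nat.Prime.pow_dvd_iff_le_factorization hq hfac).mp hdvd
  · simp [Nat.factorization_eq_zero_of_not_prime _ hq]

lemma conj_add_central {c x : Eˣ} {j : ℕ} (hx : x⁻¹ * c * x = c ^ j)
    {t : E} (ht : t ∈ Subring.center E) :
    ((x : E))⁻¹ * ((c : E) + t) * (x : E) = (c : E) ^ j + t := by
  have h1 : ((x : E))⁻¹ * (c : E) * (x : E) = (c : E) ^ j := by
    have h := congrArg Units.val hx; push_cast at h; exact h
  have h2 : ((x : E))⁻¹ * t * (x : E) = t := by
    have h3 : ((x : E))⁻¹ * t = t * ((x : E))⁻¹ :=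
      Subring.mem_center_iff.mp ht ((x : E))⁻¹
    rw [h3, mul_assoc, inv_mul_cancel₀ (Units.ne_zero x), mul_one]
  rw [mul_add, add_mul, h1, h2]

lemma central_add_ne {c : Eˣ} (hc : (c : E) ∉ Subring.center E)
    {t : E} (ht : t ∈ Subring.center E) : (c : E) + t ≠ 0 := by
  intro h0
  apply hc
  have h1 : (c : E) = -t := eq_neg_of_add_eq_zero_left h0
  rw [h1]
  exact Subring.neg_mem _ ht

lemma zeta_torsion {c x : Eˣ} {j : ℕ}
    (hc : (c : E) ∉ Subring.center E) (hx : x⁻¹ * c * x = c ^ j)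
    (htors : ∀ a b : Eˣ, ∃ M, 0 < M ∧ (a * b * a⁻¹ * b⁻¹) ^ M = 1)
    {t : E} (ht : t ∈ Subring.center E) :
    ∃ M, 0 < M ∧ (((c : E) ^ j + t) * ((c : E) + t)⁻¹) ^ M = 1 := by
  have hct : (c : E) + t ≠ 0 := central_add_ne hc ht
  set u : Eˣ := Units.mk0 ((c : E) + t) hct with hu
  obtain ⟨M, hM, hpow⟩ := htors x⁻¹ u
  refine ⟨M, hM, ?_⟩
  have hval : ((x⁻¹ * u * (x⁻¹)⁻¹ * u⁻¹ : Eˣ) : E)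
      = ((c : E) ^ j + t) * ((c : E) + t)⁻¹ := by
    push_cast [hu]
    rw [inv_inv]
    congr 1
    exact conj_add_central hx ht
  have h := congrArg Units.val hpow
  rw [Units.val_pow_eq_pow_val, hval] at h
  simpa using h

private lemma finite_rat_transport {M : Type*} [AddCommGroup M] {m1 m2 : Module ℚ M}
    (h : @Module.Finite ℚ M _ _ m1) : @Module.Finite ℚ M _ _ m2 := by
  cases Subsingleton.elim m1 m2; exact h

private lemma finrank_rat_eq {M : Type*} [AddCommGroup M] (m1 m2 : Module ℚ M) :
    @Module.finrank ℚ M _ _ m1 = @Module.finrank ℚ M _ _ m2 := by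
  cases Subsingleton.elim m1 m2; rfl

lemma natCast_mem_center (t : ℕ) : (t : E) ∈ Subring.center E := by
  rw [Subring.mem_center_iff]
  intro g
  exact ((Nat.cast_commute t g).eq).symm

lemma endgame_char0 [CharZero E] {c x : Eˣ} {j : ℕ}
    (hc : (c : E) ∉ Subring.center E)
    (htor : IsOfFinOrder c)
    (hx : x⁻¹ * c * x = c ^ j)
    (hne : x⁻¹ * c * x ≠ c)
    (htors : ∀ a b : Eˣ, ∃ M, 0 < M ∧ (a * b * a⁻¹ * b⁻¹) ^ M = 1) : False := by
  classical
  have hcjc : (c : E) ^ j ≠ (c : E) := by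
    intro hEq
    apply hne
    rw [hx]
    apply Units.ext
    push_cast
    exact hEq
  set n := orderOf c with hn
  have hn0 : 0 < n := htor.orderOf_pos
  have hvn : (c : E) ^ n = 1 := by
    have h := congrArg Units.val (pow_orderOf_eq_one c); push_cast at h; exact h
  -- the number field F₁ = ℚ(c)
  set F₁ := Algebra.adjoin ℚ {(c : E)} with hF₁
  letI : CommRing ↥F₁ := Algebra.adjoinCommRingOfComm _ (by
    rintro a ha b hb
    simp only [Set.mem_singleton_iff] at ha hb
    rw [ha, hb])
  have hint : IsIntegral ℚ ((c : E)) := by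
    refine ⟨X ^ n - C 1, Polynomial.monic_X_pow_sub_C _ (by omega), ?_⟩
    simp [hvn]
  haveI hMF : Module.Finite ℚ ↥F₁ := ⟨(Submodule.fg_top _).mpr hint.fg_adjoin_singleton⟩
  haveI : Algebra.IsIntegral ℚ ↥F₁ := Algebra.IsIntegral.of_finite _ _
  have hinj : Function.Injective (algebraMap ℚ ↥F₁) := RingHom.injective _
  have hKfield : IsField ↥F₁ := (Algebra.IsIntegral.isField_iff_isField hinj).mp (Field.toIsField _)
  letI : Field ↥F₁ := hKfield.toField
  haveI : Module.Finite ℚ ↥F₁ := ⟨(Submodule.fg_top _).mpr hint.fg_adjoin_singleton⟩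
  haveI : CharZero ↥F₁ := ⟨fun a b hab => by
    have : ((a : ℕ) : E) = ((b : ℕ) : E) := by
      exact_mod_cast congrArg (Subtype.val) hab
    exact_mod_cast this⟩
  have hcin : (c : E) ∈ F₁ := Algebra.self_mem_adjoin_singleton _ _
  set α : ↥F₁ := ⟨(c : E), hcin⟩ with hα
  -- the family of roots of unity
  have hBne : ∀ t : ℕ, (α + (t : ℕ) : ↥F₁) ≠ 0 := by
    intro t h0
    apply central_add_ne hc (natCast_mem_center t) (t := (t : E))
    have := congrArg Subtype.val h0
    push_cast at this
    exact this
  set ζf : ℕ → ↥F₁ := fun t => (α ^ j + (t : ℕ)) * (α + (t : ℕ))⁻¹ with hζf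
  have hζval : ∀ t : ℕ, ((ζf t : ↥F₁) : E) = ((c : E) ^ j + t) * ((c : E) + t)⁻¹ := by
    intro t
    have h2 : ((α + (t : ℕ))⁻¹ * (α + (t : ℕ)) : ↥F₁) = 1 := inv_mul_cancel₀ (hBne t)
    have h3 := congrArg Subtype.val h2
    push_cast at h3
    have h1 : (((α + (t : ℕ))⁻¹ : ↥F₁) : E) = ((c : E) + t)⁻¹ :=
      (inv_eq_of_mul_eq_one_left h3).symm
    have h4 : ((ζf t : ↥F₁) : E)
        = ((α ^ j + (t : ℕ) : ↥F₁) : E) * (((α + (t : ℕ))⁻¹ : ↥F₁) : E) := rfl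
    rw [h4, h1]
    congr 1
  have hζtor : ∀ t : ℕ, ∃ M, 0 < M ∧ (ζf t) ^ M = 1 := by
    intro t
    obtain ⟨M, hM, hpow⟩ := zeta_torsion hc hx htors (natCast_mem_center t)
    refine ⟨M, hM, ?_⟩
    apply Subtype.ext
    rw [SubmonoidClass.coe_pow, hζval t, OneMemClass.coe_one]
    exact hpow
  have hζinj : Function.Injective ζf := by
    intro t s hts
    by_contra hne'
    apply hcjc
    have h1 : (α ^ j + (t : ℕ)) * (α + (s : ℕ)) = (α ^ j + (s : ℕ)) * (α + (t : ℕ)) := by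
      have h2 := hts
      rw [hζf] at h2
      field_simp [hBne t, hBne s] at h2
      linear_combination h2
    have h3 : ((t : ↥F₁) - (s : ℕ)) * (α - α ^ j) = 0 := by ring_nf; linear_combination h1
    have h4 : ((t : ↥F₁) - (s : ℕ)) ≠ 0 := by
      intro h5
      apply hne'
      have : ((t : ℕ) : ↥F₁) = ((s : ℕ) : ↥F₁) := by linear_combination h5
      exact_mod_cast this
    have h6 : α - α ^ j = 0 := by
      rcases mul_eq_zero.mp h3 with h | h
      · exact absurd h h4
      · exact h
    have h7 : α = α ^ j := by linear_combination h6
    have := congrArg Subtype.val h7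
    push_cast at this
    exact this.symm
  -- infinitely many roots of unity in F₁
  set d := Module.finrank ℚ ↥F₁ with hd
  have hdpos : 0 < d := Module.finrank_pos
  set B := (2 * d).factorial with hB
  have hUfin : (⋃ k ∈ Finset.Icc 1 B, {u : ↥F₁ | u ^ k = 1}).Finite := by
    apply Set.Finite.biUnion (Finset.finite_toSet _)
    intro k hk
    have hk1 : k ≠ 0 := by
      simp only [Finset.coe_Icc, Set.mem_Icc] at hk
      omega
    have : {u : ↥F₁ | u ^ k = 1} ⊆ {u : ↥F₁ | (X ^ k - C 1 : (↥F₁)[X]).IsRoot u} := by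
      intro u hu
      simp only [Set.mem_setOf_eq] at hu ⊢
      simp [Polynomial.IsRoot, hu]
    exact Set.Finite.subset (Polynomial.finite_setOf_isRoot
      (Polynomial.Monic.ne_zero (Polynomial.monic_X_pow_sub_C _ hk1))) this
  have hrange : (Set.range ζf).Infinite := Set.infinite_range_of_injective hζinj
  have hnot : ¬ (Set.range ζf ⊆ ⋃ k ∈ Finset.Icc 1 B, {u : ↥F₁ | u ^ k = 1}) := by
    intro hsub
    exact hrange (Set.Finite.subset hUfin hsub)
  rw [Set.not_subset] at hnot
  obtain ⟨ζ, hζr, hζnot⟩ := hnot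
  obtain ⟨t0, ht0⟩ := hζr
  obtain ⟨M, hM, hMpow⟩ := hζtor t0
  rw [ht0] at hMpow
  have hζfin : IsOfFinOrder ζ := isOfFinOrder_iff_pow_eq_one.mpr ⟨M, hM, hMpow⟩
  set N := orderOf ζ with hN
  have hN0 : 0 < N := hζfin.orderOf_pos
  have hNB : B < N := by
    by_contra hle
    push_neg at hle
    apply hζnot
    simp only [Set.mem_iUnion]
    refine ⟨N, ?_, ?_⟩
    · simp only [Finset.mem_coe, Finset.mem_Icc]
      omega
    · exact pow_orderOf_eq_one ζ
  have hprim : IsPrimitiveRoot ζ N := IsPrimitiveRoot.orderOf ζ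
  have hmp : cyclotomic N ℚ = minpoly ℚ ζ := cyclotomic_eq_minpoly_rat hprim hN0
  have htotle : N.totient ≤ d := by
    have h1 := @minpoly.natDegree_le ℚ ↥F₁ _ _ _ (finite_rat_transport hMF) ζ _
    rw [← hmp, natDegree_cyclotomic] at h1
    calc N.totient ≤ _ := h1
      _ = d := by rw [hd]; exact finrank_rat_eq _ _
  have hdvd : N ∣ B := tot_bound hN0 hdpos htotle
  have : N ≤ B := Nat.le_of_dvd (Nat.factorial_pos _) hdvd
  omega





/-- char p, with a central element transcendental over the prime field -/
lemma endgame_p_trans (p : ℕ) [Fact p.Prime] [CharP E p] [Algebra (ZMod p) E] {c x : Eˣ} {j : ℕ}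
    (hc : (c : E) ∉ Subring.center E)
    (htor : IsOfFinOrder c)
    (hx : x⁻¹ * c * x = c ^ j)
    (hne : x⁻¹ * c * x ≠ c)
    (hzeta : ∀ t : E, t ∈ Subring.center E →
      ∃ M, 0 < M ∧ (((c : E) ^ j + t) * ((c : E) + t)⁻¹) ^ M = 1)
    {θ : E} (hθc : θ ∈ Subring.center E)
    (hθ : ¬ IsIntegral (ZMod p) θ) : False := by
  classical
  have hcjc : (c : E) ^ j ≠ (c : E) := by
    intro hEq
    exact hne (by rw [hx]; exact Units.ext (by push_cast; exact hEq))
  set n := orderOf c with hn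
  have hn0 : 0 < n := htor.orderOf_pos
  have hvn : (c : E) ^ n = 1 := by
    have h := congrArg Units.val (pow_orderOf_eq_one c); push_cast at h; exact h
  have hθcomm : ∀ g : E, Commute g θ := fun g => Subring.mem_center_iff.mp hθc g
  obtain ⟨M, hM, hMpow⟩ := hzeta θ hθc
  have hBne : (c : E) + θ ≠ 0 := by
    intro h0
    exact hc (by
      have h1 : (c : E) = -θ := eq_neg_of_add_eq_zero_left h0
      rw [h1]; exact Subring.neg_mem _ hθc)
  have hcom : Commute ((c : E) ^ j + θ) ((c : E) + θ) :=
    Commute.add_right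
      (Commute.add_left ((Commute.refl ((c : E))).pow_left j) ((hθcomm ((c : E))).symm))
      (Commute.add_left (hθcomm ((c : E) ^ j)) (Commute.refl θ))
  have hkey : ((c : E) ^ j + θ) ^ M = ((c : E) + θ) ^ M := by
    have h1 : (((c : E) ^ j + θ) * ((c : E) + θ)⁻¹) ^ M
        = ((c : E) ^ j + θ) ^ M * (((c : E) + θ) ^ M)⁻¹ := by
      rw [(hcom.inv_right₀).mul_pow, inv_pow]
    rw [h1] at hMpow
    exact (mul_inv_eq_one₀ (pow_ne_zero M hBne)).mp hMpow
  -- commutative subalgebra A = adjoin {c, θ}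
  set A := Algebra.adjoin (ZMod p) ({(c : E), θ} : Set E) with hA
  letI : CommRing ↥A := Algebra.adjoinCommRingOfComm _ (by
    rintro u hu v hv
    simp only [Set.mem_insert_iff, Set.mem_singleton_iff] at hu hv
    rcases hu with rfl | rfl <;> rcases hv with rfl | rfl
    · rfl
    · exact (hθcomm ((c : E))).eq
    · exact ((hθcomm ((c : E))).eq).symm
    · rfl)
  have hcA : (c : E) ∈ A := Algebra.subset_adjoin (by simp)
  have hθA : θ ∈ A := Algebra.subset_adjoin (by simp)
  set CA : ↥A := ⟨(c : E), hcA⟩ with hCA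
  set Θ : ↥A := ⟨θ, hθA⟩ with hΘ
  have hrelA : (CA ^ j + Θ) ^ M = (CA + Θ) ^ M := by
    apply Subtype.ext
    push_cast
    exact hkey
  have hCAn : CA ^ n = 1 := by
    apply Subtype.ext
    push_cast
    exact hvn
  -- the finite field L = adjoin {CA} inside A
  set L := Algebra.adjoin (ZMod p) ({CA} : Set ↥A) with hL
  have hintC : IsIntegral (ZMod p) CA := by
    refine ⟨X ^ n - C 1, Polynomial.monic_X_pow_sub_C _ (by omega), ?_⟩
    simp [hCAn]
  haveI : Module.Finite (ZMod p) ↥L := ⟨(Submodule.fg_top _).mpr hintC.fg_adjoin_singleton⟩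
  haveI : Algebra.IsIntegral (ZMod p) ↥L := Algebra.IsIntegral.of_finite _ _
  have hinjL : Function.Injective (algebraMap (ZMod p) ↥L) := RingHom.injective _
  have hLfield : IsField ↥L := (Algebra.IsIntegral.isField_iff_isField hinjL).mp (Field.toIsField _)
  letI : Field ↥L := hLfield.toField
  set a : ↥L := ⟨CA, Algebra.self_mem_adjoin_singleton _ _⟩ with ha
  set b : ↥L := a ^ j with hb
  have hab : a ≠ b := by
    intro h
    apply hcjc
    have h1 := congrArg (Subtype.val) (congrArg (Subtype.val) h)
    push_cast at h1
    exact h1.symm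
  set Q : (↥L)[X] := (X + C b) ^ M - (X + C a) ^ M with hQ
  have hQ0 : Q ≠ 0 := by
    intro h
    have h1 := congrArg (Polynomial.eval (-b)) h
    rw [hQ] at h1
    simp only [Polynomial.eval_sub, Polynomial.eval_pow, Polynomial.eval_add,
      Polynomial.eval_X, Polynomial.eval_C, Polynomial.eval_zero, neg_add_cancel] at h1
    rw [zero_pow (by omega), zero_sub, neg_eq_zero] at h1
    have h2 : (-b + a) = a - b := by ring
    rw [h2] at h1
    have h3 : a - b = 0 := (pow_eq_zero_iff (by omega)).mp h1
    exact hab (sub_eq_zero.mp h3)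
  have haeval : Polynomial.aeval Θ Q = 0 := by
    have hvb : (algebraMap ↥L ↥A) b = CA ^ j := rfl
    have hva : (algebraMap ↥L ↥A) a = CA := rfl
    simp only [hQ, map_sub, map_pow, map_add, aeval_X, aeval_C, hvb, hva]
    rw [sub_eq_zero, add_comm Θ (CA ^ j), add_comm Θ CA]
    exact hrelA
  have halgΘ : IsAlgebraic ↥L Θ := ⟨Q, hQ0, haeval⟩
  have hintΘ : IsIntegral ↥L Θ := halgΘ.isIntegral
  have hintZ : IsIntegral (ZMod p) Θ := isIntegral_trans Θ hintΘ
  have hfinal : IsIntegral (ZMod p) θ := hintZ.map (A.val)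
  exact hθ hfinal

/-- char p, center algebraic over the prime field -/
lemma endgame_p_alg (p : ℕ) [Fact p.Prime] [CharP E p] [Algebra (ZMod p) E]
    [Module.Finite (Subring.center E) E] {c x : Eˣ} {j : ℕ}
    (hx : x⁻¹ * c * x = c ^ j)
    (hne : x⁻¹ * c * x ≠ c)
    (htor : IsOfFinOrder c)
    (halg : ∀ z : E, z ∈ Subring.center E → IsIntegral (ZMod p) z) : False := by
  classical
  haveI : Algebra (ZMod p) ↥(Subring.center E) := ZMod.algebra _ p
  haveI : Algebra.IsIntegral (ZMod p) ↥(Subring.center E) := by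
    constructor
    intro z
    have h1 : IsIntegral (ZMod p) ((z : E)) := halg _ z.2
    set f : ↥(Subring.center E) →ₐ[ZMod p] E :=
      { toRingHom := (Subring.center E).subtype
        commutes' := fun r => by
          have h2 : ((Subring.center E).subtype).comp
              (algebraMap (ZMod p) ↥(Subring.center E)) = algebraMap (ZMod p) E :=
            Subsingleton.elim _ _
          exact RingHom.congr_fun h2 r } with hf
    exact (isIntegral_algHom_iff f Subtype.val_injective).mp h1
  haveI : Algebra.IsIntegral ↥(Subring.center E) E := Algebra.IsIntegral.of_finite _ _
  haveI hEint : Algebra.IsIntegral (ZMod p) E :=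
    @Algebra.IsIntegral.trans (ZMod p) ↥(Subring.center E) E _ _ _ _ _ _
      (IsScalarTower.of_algebraMap_eq' (Subsingleton.elim _ _)) _ _
  -- every nonzero element is torsion
  have htorall : ∀ e : E, e ≠ 0 → ∃ m, 0 < m ∧ e ^ m = 1 := by
    intro e he
    have hint : IsIntegral (ZMod p) e := Algebra.IsIntegral.isIntegral e
    haveI : Module.Finite (ZMod p) ↥(Algebra.adjoin (ZMod p) ({e} : Set E)) :=
      ⟨(Submodule.fg_top _).mpr hint.fg_adjoin_singleton⟩
    haveI : Finite ↥(Algebra.adjoin (ZMod p) ({e} : Set E)) := Module.finite_of_finite (ZMod p)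
    set η : ↥(Algebra.adjoin (ZMod p) ({e} : Set E)) :=
      ⟨e, Algebra.self_mem_adjoin_singleton _ _⟩ with hη
    have key : ∀ {i i' : ℕ}, i < i' → η ^ i = η ^ i' → ∃ m, 0 < m ∧ e ^ m = 1 := by
      intro i i' hlt hpow
      refine ⟨i' - i, by omega, ?_⟩
      have hv : e ^ i = e ^ i' := by
        have h := congrArg Subtype.val hpow
        rwa [SubmonoidClass.coe_pow, SubmonoidClass.coe_pow] at h
      have h3 : e ^ i * e ^ (i' - i) = e ^ i * 1 := by
        rw [mul_one, ← pow_add, show i + (i' - i) = i' from by omega]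
        exact hv.symm
      exact mul_left_cancel₀ (pow_ne_zero i he) h3
    obtain ⟨i, i', hii, hpow⟩ := Finite.exists_ne_map_eq_of_infinite (fun i : ℕ => η ^ i)
    rcases Nat.lt_or_ge i i' with hlt | hge
    · exact key hlt hpow
    · have hlt : i' < i := by omega
      exact key hlt hpow.symm
  -- x and c are torsion
  obtain ⟨mx, hmx0, hmxe⟩ := htorall (x : E) (Units.ne_zero x)
  set n := orderOf c with hn
  have hn0 : 0 < n := htor.orderOf_pos
  have hvn : (c : E) ^ n = 1 := by
    have h := congrArg Units.val (pow_orderOf_eq_one c); push_cast at h; exact h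
  -- commutation rules
  have hconjpow : ∀ a : ℕ, x⁻¹ * c ^ a * x = (x⁻¹ * c * x) ^ a := by
    intro a
    induction a with
    | zero => simp
    | succ a ih =>
      rw [pow_succ, pow_succ, ← ih]
      group
  have h1 : ∀ a : ℕ, c ^ a * x = x * c ^ (a * j) := by
    intro a
    have h2 := hconjpow a
    rw [hx, ← pow_mul] at h2
    -- h2 : x⁻¹ * c^a * x = c^(j*a)
    have h3 : c ^ a * x = x * c ^ (j * a) := by
      rw [← h2]
      group
    rw [h3]
    congr 1
    ring
  have hmove : ∀ b a : ℕ, c ^ a * x ^ b = x ^ b * c ^ (a * j ^ b) := by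
    intro b
    induction b with
    | zero => intro a; simp
    | succ b ih =>
      intro a
      calc c ^ a * x ^ (b+1) = (c ^ a * x) * x ^ b := by
            rw [pow_succ']; rw [← mul_assoc]
        _ = x * (c ^ (a * j) * x ^ b) := by rw [h1 a, mul_assoc]
        _ = x * (x ^ b * c ^ (a * j * j ^ b)) := by rw [ih (a * j)]
        _ = x ^ (b+1) * c ^ (a * j ^ (b+1)) := by
            rw [← mul_assoc, ← pow_succ']
            congr 1
            ring
  -- the finite monoid set
  set Gs : Set E := {v | ∃ b a : ℕ, v = (x : E) ^ b * (c : E) ^ a} with hGs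
  have hGfin : Gs.Finite := by
    apply Set.Finite.subset (Set.Finite.image (f := fun ab : ℕ × ℕ => (x : E) ^ ab.1 * (c : E) ^ ab.2)
      (Set.Finite.prod (Set.finite_Iio mx) (Set.finite_Iio n)))
    rintro v ⟨b, a, rfl⟩
    refine ⟨(b % mx, a % n), ⟨Nat.mod_lt _ hmx0, Nat.mod_lt _ hn0⟩, ?_⟩
    simp only []
    rw [pow_eq_pow_mod b hmxe, pow_eq_pow_mod a hvn]
  have hGmul : ∀ v ∈ Gs, ∀ w ∈ Gs, v * w ∈ Gs := by
    rintro v ⟨b, a, rfl⟩ w ⟨b', a', rfl⟩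
    refine ⟨b + b', a * j ^ b' + a', ?_⟩
    have hu : (x ^ b * c ^ a) * (x ^ b' * c ^ a') = x ^ (b + b') * c ^ (a * j ^ b' + a') := by
      calc (x ^ b * c ^ a) * (x ^ b' * c ^ a')
          = x ^ b * ((c ^ a * x ^ b') * c ^ a') := by
            rw [mul_assoc, ← mul_assoc (c ^ a)]
        _ = x ^ b * ((x ^ b' * c ^ (a * j ^ b')) * c ^ a') := by rw [hmove b' a]
        _ = x ^ (b + b') * c ^ (a * j ^ b' + a') := by
            rw [pow_add, pow_add]
            group
    have hval := congrArg Units.val hu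
    push_cast at hval
    exact hval
  -- span over the prime field
  set W := Submodule.span (ZMod p) Gs with hW
  have hWmul : ∀ v ∈ W, ∀ w ∈ W, v * w ∈ W := by
    intro v hv w hw
    have h := Submodule.mul_mem_mul hv hw
    rw [Submodule.span_mul_span] at h
    exact Submodule.span_le.mpr
      (le_trans (Set.mul_subset_iff.mpr hGmul) Submodule.subset_span) h
  set R : Subring E :=
    { carrier := W
      mul_mem' := fun hv hw => hWmul _ hv _ hw
      one_mem' := Submodule.subset_span ⟨0, 0, by simp⟩
      add_mem' := fun hv hw => W.add_mem hv hw
      zero_mem' := W.zero_mem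
      neg_mem' := fun hv => W.neg_mem hv } with hR
  haveI : Finite ↥W := by
    haveI := FiniteDimensional.span_of_finite (ZMod p) hGfin
    exact Module.finite_of_finite (ZMod p)
  have hWsetfin : (W : Set E).Finite := Set.finite_coe_iff.mp inferInstance
  haveI hRfin : Finite ↥R := Set.finite_coe_iff.mpr hWsetfin
  haveI : IsDomain ↥R := inferInstance
  letI := Fintype.ofFinite ↥R
  letI := Classical.decEq ↥R
  letI : DivisionRing ↥R := Fintype.divisionRingOfIsDomain ↥R
  letI : Field ↥R := littleWedderburn ↥R
  have hcR : (c : E) ∈ R := Submodule.subset_span ⟨0, 1, by simp⟩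
  have hxR : (x : E) ∈ R := Submodule.subset_span ⟨1, 0, by simp⟩
  have hcomm : (c : E) * (x : E) = (x : E) * (c : E) := by
    have h := mul_comm (⟨(c : E), hcR⟩ : ↥R) ⟨(x : E), hxR⟩
    exact congrArg Subtype.val h
  apply hne
  have hcu : c * x = x * c := Units.ext (by push_cast; exact hcomm)
  rw [mul_assoc, hcu, ← mul_assoc, inv_mul_cancel, one_mul]


theorem core (E : Type*) [DivisionRing E] [Module.Finite (Subring.center E) E]
    (hrad : ∀ a b : Eˣ, ∃ m : ℕ, 0 < m ∧
      (((a * b * a⁻¹ * b⁻¹ : Eˣ) : E)) ^ m ∈ Subring.center E) :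
    ∀ a b : E, a * b = b * a := by
  classical
  have htors : ∀ a b : Eˣ, ∃ M, 0 < M ∧ (a * b * a⁻¹ * b⁻¹) ^ M = 1 := by
    intro a b
    obtain ⟨m, hm, hmem⟩ := hrad a b
    obtain ⟨h1, h2⟩ := comm_torsion a b m hm hmem
    exact ⟨_, h2, h1⟩
  by_contra hcon
  push_neg at hcon
  obtain ⟨a, b, hab⟩ := hcon
  have ha0 : a ≠ 0 := by rintro rfl; exact hab (by simp)
  set au : Eˣ := Units.mk0 a ha0 with hau
  have hanc : (au : E) ∉ Subring.center E := by
    intro hmem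
    exact hab (Subring.mem_center_iff.mp hmem b).symm
  have hnc : ¬ ∀ v : Eˣ, ((au * v * au⁻¹ * v⁻¹ : Eˣ) : E) ∈ Subring.center E := by
    intro hall
    exact hanc (hua au hall)
  push_neg at hnc
  obtain ⟨v, hv⟩ := hnc
  have hctor : IsOfFinOrder (au * v * au⁻¹ * v⁻¹) := by
    obtain ⟨M, hM, h1⟩ := htors au v
    exact isOfFinOrder_iff_pow_eq_one.mpr ⟨M, hM, h1⟩
  obtain ⟨x, j, hx, hne⟩ := herstein hv hctor
  obtain ⟨p, hp⟩ := CharP.exists E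
  rcases CharP.char_is_prime_or_zero E p with hprime | hzero
  · haveI : Fact p.Prime := ⟨hprime⟩
    letI : Algebra (ZMod p) E := ZMod.algebra E p
    by_cases halg : ∀ z : E, z ∈ Subring.center E → IsIntegral (ZMod p) z
    · exact endgame_p_alg p hx hne hctor halg
    · push_neg at halg
      obtain ⟨θ, hθc, hθ⟩ := halg
      refine endgame_p_trans p hv hctor hx hne ?_ hθc hθ
      intro t ht
      exact zeta_torsion hv hx htors ht
  · subst hzero
    haveI : CharZero E := CharP.charP_to_charZero E
    exact endgame_char0 hv hctor hx hne htors

end CCR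

/-- If every multiplicative commutator of a weakly locally finite division ring `D` is
radical over the center `F` (some positive power lies in `F`), then `D` is
commutative. -/
theorem commutative_of_commutators_radical (D : Type*) [DivisionRing D]
    (h : IsWeaklyLocallyFinite D)
    (hrad : ∀ a b : Dˣ, ∃ m : ℕ, 0 < m ∧
      (((a * b * a⁻¹ * b⁻¹ : Dˣ) : D)) ^ m ∈ Subring.center D) :
    ∀ a b : D, a * b = b * a := by
  intro a b
  classical
  set Efld := Subfield.closure ({a, b} : Set D) with hE
  have hset : ((({a, b} : Finset D) : Set D)) = ({a, b} : Set D) := by simp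
  have hfin : Module.Finite (Subring.center ↥Efld) ↥Efld := by
    have h2 := h ({a, b} : Finset D)
    unfold IsCentrallyFinite at h2
    rw [hset] at h2
    exact h2
  haveI := hfin
  set f : ↥Efld →* D := (Efld.subtype : ↥Efld →+* D).toMonoidHom with hf
  have hradE : ∀ u v : (↥Efld)ˣ, ∃ m : ℕ, 0 < m ∧
      (((u * v * u⁻¹ * v⁻¹ : (↥Efld)ˣ) : ↥Efld)) ^ m ∈ Subring.center ↥Efld := by
    intro u v
    obtain ⟨m, hm, hmem⟩ := hrad (Units.map f u) (Units.map f v)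
    refine ⟨m, hm, ?_⟩
    have hwval : (((Units.map f u) * (Units.map f v) * (Units.map f u)⁻¹
        * (Units.map f v)⁻¹ : Dˣ) : D)
        = (((u * v * u⁻¹ * v⁻¹ : (↥Efld)ˣ) : ↥Efld) : D) := by
      rw [← map_inv, ← map_inv, ← map_mul, ← map_mul, ← map_mul]
      rfl
    rw [hwval] at hmem
    rw [Subring.mem_center_iff]
    intro g
    apply Subtype.ext
    push_cast
    have hcen := Subring.mem_center_iff.mp hmem ((g : D))
    -- hmem is about D-values
    exact_mod_cast hcen
  have haE : a ∈ Efld := Subfield.subset_closure (by simp)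
  have hbE : b ∈ Efld := Subfield.subset_closure (by simp)
  have hcomm := CCR.core ↥Efld hradE ⟨a, haE⟩ ⟨b, hbE⟩
  have := congrArg Subtype.val hcomm
  push_cast at this
  exact_mod_cast this
end
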